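/- Suppose η ∈ W with η(·,0) = 0, η_s ∈ W, w ∈ H¹₀(0,L), f⁶ ∈ W, λ ∈ ℝ, and iλη + η_s - w = f⁶ in W. Then the Gurtin–Pipkin coupling estimate holds: (g(0)/2)∫₀^L|w_x|² dx ≤ 2|λ|²∫₀^L∫₀^∞σ(s)|η_x|² ds dx + (σ(0)/g(0))∫₀^L∫₀^∞(-σ'(s))|η_x|² ds dx + 2∫₀^L∫₀^∞σ(s)|f⁶_x|² ds dx. -/

import Mathlib

open MeasureTheory Set Filter

/-- An a.e.-nonneg integrable function on `(0,∞)` with a limit at `+∞` has limit `≤ 0`. -/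
lemma gp_limit_nonpos {f : ℝ → ℝ} {c : ℝ}
    (hf : IntegrableOn f (Ioi 0)) (h0 : ∀ x, 0 ≤ f x)
    (hl : Tendsto f atTop (nhds c)) : c ≤ 0 := by
  by_contra h
  push_neg at h
  have hev : ∀ᶠ x in atTop, c / 2 ≤ f x := hl.eventually (eventually_ge_nhds (by linarith))
  obtain ⟨T, hT⟩ := eventually_atTop.mp hev
  set T' := max T 1 with hT'
  have hsub : Ioi T' ⊆ Ioi (0:ℝ) := Ioi_subset_Ioi (by positivity)
  have hf' : IntegrableOn f (Ioi T') := hf.mono_set hsub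
  have hconst : IntegrableOn (fun _ : ℝ => c / 2) (Ioi T') := by
    refine Integrable.mono' hf' aestronglyMeasurable_const ?_
    filter_upwards [ae_restrict_mem measurableSet_Ioi] with x hx
    have : T ≤ x := le_of_lt (lt_of_le_of_lt (le_max_left _ _) hx)
    rw [Real.norm_eq_abs, abs_of_nonneg (by linarith : (0:ℝ) ≤ c / 2)]
    exact hT x (le_of_lt (lt_of_le_of_lt (le_max_left _ _) hx))
  have h2 := (integrable_const_iff (c := c / 2)).mp hconst
  rcases h2 with h1 | h2
  · exact absurd h1 (by positivity)
  · haveI := h2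
    have h3 := measure_lt_top (volume.restrict (Ioi T')) univ
    simp [Measure.restrict_apply_univ, Real.volume_Ioi] at h3

/-- Cauchy–Schwarz bound for a weighted integral. -/
lemma gp_cs {w : ℝ → ℝ} {g : ℝ → ℂ}
    (hw0 : ∀ s ∈ Ioi (0:ℝ), 0 ≤ w s)
    (hwint : IntegrableOn w (Ioi 0))
    (hG : IntegrableOn (fun s => w s * ‖g s‖ ^ 2) (Ioi 0))
    (hgm : AEStronglyMeasurable g (volume.restrict (Ioi (0:ℝ)))) :
    IntegrableOn (fun s => (w s : ℂ) * g s) (Ioi 0) ∧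
      ‖∫ s in Ioi (0:ℝ), (w s : ℂ) * g s‖ ^ 2 ≤
        (∫ s in Ioi (0:ℝ), w s) * ∫ s in Ioi (0:ℝ), w s * ‖g s‖ ^ 2 := by
  have hw0' : ∀ᵐ s ∂(volume.restrict (Ioi (0:ℝ))), 0 ≤ w s := by
    filter_upwards [ae_restrict_mem measurableSet_Ioi] with s hs using hw0 s hs
  have hNmeas : AEStronglyMeasurable (fun s => w s * ‖g s‖)
      (volume.restrict (Ioi (0:ℝ))) := hwint.1.mul hgm.norm
  have hNint : IntegrableOn (fun s => w s * ‖g s‖) (Ioi 0) := by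
    refine Integrable.mono' ((hwint.add hG).const_mul (1/2 : ℝ)) hNmeas ?_
    filter_upwards [hw0'] with s hs
    have h1 : |w s * ‖g s‖| = w s * ‖g s‖ := abs_of_nonneg (by positivity)
    rw [Real.norm_eq_abs, h1]
    simp only [Pi.add_apply]
    nlinarith [mul_nonneg hs (sq_nonneg (1 - ‖g s‖)), norm_nonneg (g s)]
  have hint : IntegrableOn (fun s => (w s : ℂ) * g s) (Ioi 0) := by
    refine Integrable.mono' hNint ((Complex.continuous_ofReal.comp_aestronglyMeasurable hwint.1).mul hgm) ?_
    filter_upwards [hw0'] with s hs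
    simp [norm_mul, abs_of_nonneg hs]
  refine ⟨hint, ?_⟩
  set N := ∫ s in Ioi (0:ℝ), w s * ‖g s‖ with hN
  set W := ∫ s in Ioi (0:ℝ), w s with hW
  set G := ∫ s in Ioi (0:ℝ), w s * ‖g s‖ ^ 2 with hG2
  have hNnonneg : 0 ≤ N := by
    refine setIntegral_nonneg measurableSet_Ioi fun s hs => ?_
    exact mul_nonneg (hw0 s hs) (norm_nonneg _)
  have hWnonneg : 0 ≤ W := setIntegral_nonneg measurableSet_Ioi hw0
  have hGnonneg : 0 ≤ G :=
    setIntegral_nonneg measurableSet_Ioi fun s hs => mul_nonneg (hw0 s hs) (by positivity)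
  have hPN : ‖∫ s in Ioi (0:ℝ), (w s : ℂ) * g s‖ ≤ N := by
    refine (norm_integral_le_integral_norm _).trans (le_of_eq ?_)
    refine integral_congr_ae ?_
    filter_upwards [hw0'] with s hs
    simp [norm_mul, abs_of_nonneg hs]
  have hkey : ∀ t : ℝ, 0 < t → 2 * t * N ≤ W + t ^ 2 * G := by
    intro t ht
    have hpt : ∀ᵐ s ∂(volume.restrict (Ioi (0:ℝ))),
        2 * t * (w s * ‖g s‖) ≤ w s + t ^ 2 * (w s * ‖g s‖ ^ 2) := by
      filter_upwards [hw0'] with s hs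
      nlinarith [mul_nonneg hs (sq_nonneg (1 - t * ‖g s‖))]
    have := integral_mono_ae (hNint.const_mul (2 * t))
      (hwint.add (hG.const_mul (t ^ 2))) hpt
    simp only [Pi.add_apply] at this
    rwa [integral_const_mul, integral_add hwint (hG.const_mul (t ^ 2)),
      integral_const_mul] at this
  have hNsq : N ^ 2 ≤ W * G := by
    rcases eq_or_lt_of_le hNnonneg with hN0 | hNpos
    · nlinarith
    rcases eq_or_lt_of_le hGnonneg with hG0 | hGpos
    · exfalso
      have := hkey ((W + 1) / (2 * N)) (by positivity)
      rw [← hG0] at this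
      have h2 : 2 * ((W + 1) / (2 * N)) * N = W + 1 := by field_simp
      nlinarith
    · have := hkey (N / G) (by positivity)
      have hG' : G ≠ 0 := ne_of_gt hGpos
      rw [div_pow] at this
      have e1 : 2 * (N / G) * N = 2 * (N ^ 2 / G) := by field_simp
      have e2 : N ^ 2 / G ^ 2 * G = N ^ 2 / G := by field_simp
      rw [e1, e2] at this
      have h3 : N ^ 2 / G ≤ W := by linarith
      exact (div_le_iff₀ hGpos).mp h3
  calc ‖∫ s in Ioi (0:ℝ), (w s : ℂ) * g s‖ ^ 2 ≤ N ^ 2 := by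
        nlinarith [norm_nonneg (∫ s in Ioi (0:ℝ), (w s : ℂ) * g s)]
    _ ≤ W * G := hNsq

/-- The per-`x` Gurtin–Pipkin estimate. -/
lemma gp_slice (g0 σ0 lam : ℝ) (σ σ' : ℝ → ℝ)
    (hσ : ∀ s ∈ Ioi (0:ℝ), 0 ≤ σ s)
    (hσint : IntegrableOn σ (Ioi 0))
    (hσ'int : IntegrableOn σ' (Ioi 0))
    (hσ'sum : (∫ s in Ioi (0:ℝ), -σ' s) ≤ σ0)
    (hσ'neg : ∀ s ∈ Ioi (0:ℝ), σ' s ≤ 0)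
    (hσ0 : Tendsto σ (nhdsWithin 0 (Ioi 0)) (nhds σ0))
    (hσderiv : ∀ s ∈ Ioi (0:ℝ), HasDerivAt σ (σ' s) s)
    (hg0 : g0 = ∫ s in Ioi (0:ℝ), σ s) (hg0pos : 0 < g0)
    (η ηs : ℝ → ℂ) (w : ℂ) (f : ℝ → ℂ)
    (hη0 : η 0 = 0) (hηs : ∀ s, HasDerivAt η (ηs s) s)
    (hηsm : AEStronglyMeasurable ηs (volume.restrict (Ioi (0:ℝ))))
    (heq : ∀ s ∈ Ioi (0:ℝ), Complex.I * (lam : ℂ) * η s + ηs s - w = f s)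
    (hA : IntegrableOn (fun s => σ s * ‖η s‖ ^ 2) (Ioi 0))
    (hB : IntegrableOn (fun s => σ' s * ‖η s‖ ^ 2) (Ioi 0))
    (hC : IntegrableOn (fun s => σ s * ‖f s‖ ^ 2) (Ioi 0)) :
    g0 / 2 * ‖w‖ ^ 2 ≤ 2 * lam ^ 2 * (∫ s in Ioi (0:ℝ), σ s * ‖η s‖ ^ 2)
      + σ0 / g0 * (∫ s in Ioi (0:ℝ), (-σ' s) * ‖η s‖ ^ 2)
      + 2 * (∫ s in Ioi (0:ℝ), σ s * ‖f s‖ ^ 2) := by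
  have hmemae := ae_restrict_mem (μ := volume) (s := Ioi (0:ℝ)) measurableSet_Ioi
  have hηcont : Continuous η := by
    rw [continuous_iff_continuousAt]; exact fun s => (hηs s).continuousAt
  have hηm : AEStronglyMeasurable η (volume.restrict (Ioi (0:ℝ))) :=
    hηcont.aestronglyMeasurable
  have hfm : AEStronglyMeasurable f (volume.restrict (Ioi (0:ℝ))) := by
    refine AEStronglyMeasurable.congr
      (f := fun s => Complex.I * (lam : ℂ) * η s + ηs s - w) ?_ ?_
    · exact (((aestronglyMeasurable_const.mul hηm).add hηsm).sub aestronglyMeasurable_const)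
    · filter_upwards [hmemae] with s hs using heq s hs
  -- Cauchy–Schwarz bounds
  obtain ⟨hPint, hP⟩ := gp_cs hσ hσint hA hηm
  have hσ'neg' : ∀ s ∈ Ioi (0:ℝ), 0 ≤ -σ' s := fun s hs => neg_nonneg.mpr (hσ'neg s hs)
  obtain ⟨hQint, hQ⟩ := gp_cs hσ'neg' hσ'int.neg (hB.neg.congr (Eventually.of_forall fun s => by simp only [Pi.neg_apply]; ring)) hηm
  obtain ⟨hRint, hR⟩ := gp_cs hσ hσint hC hfm
  set P := ∫ s in Ioi (0:ℝ), (σ s : ℂ) * η s with hPdef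
  set Q := ∫ s in Ioi (0:ℝ), ((-σ' s : ℝ) : ℂ) * η s with hQdef
  set R := ∫ s in Ioi (0:ℝ), (σ s : ℂ) * f s with hRdef
  -- integrability of σ ηs
  have hσw : IntegrableOn (fun s => (σ s : ℂ) * w) (Ioi 0) := hσint.ofReal.mul_const w
  have hσηs : IntegrableOn (fun s => (σ s : ℂ) * ηs s) (Ioi 0) := by
    refine Integrable.congr
      ((hσw.add hRint).sub (hPint.const_mul (Complex.I * (lam : ℂ)))) ?_
    filter_upwards [hmemae] with s hs
    have h := heq s hs
    have hh : ηs s = f s + w - Complex.I * (lam : ℂ) * η s := by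
      rw [← h]; ring
    simp only [Pi.add_apply, Pi.sub_apply, Pi.neg_apply]
    rw [hh]; ring
  have hσ'η : IntegrableOn (fun s => ((σ' s : ℝ) : ℂ) * η s) (Ioi 0) := by
    have := hQint.neg
    refine this.congr (Eventually.of_forall fun s => ?_)
    simp only [Pi.neg_apply]
    push_cast; ring
  -- the FTC argument
  set F : ℝ → ℂ := fun s => (σ s : ℂ) * η s with hFdef
  set F' : ℝ → ℂ := fun s => ((σ' s : ℝ) : ℂ) * η s + (σ s : ℂ) * ηs s with hF'def
  have hF'int : IntegrableOn F' (Ioi 0) := hσ'η.add hσηs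
  have hFd : ∀ s ∈ Ioi (0:ℝ), HasDerivAt F (F' s) s := fun s hs =>
    ((hσderiv s hs).ofReal_comp.mul (hηs s))
  set Ft : ℝ → ℂ := fun s => if 0 < s then F s else 0 with hFtdef
  have hFt0 : Ft 0 = 0 := by simp [hFtdef]
  have hFtd : ∀ s ∈ Ioi (0:ℝ), HasDerivAt Ft (F' s) s := by
    intro s hs
    refine (hFd s hs).congr_of_eventuallyEq ?_
    filter_upwards [Ioi_mem_nhds hs] with r hr
    simp only [hFtdef, if_pos (mem_Ioi.mp hr)]
  have hFtcont : ContinuousWithinAt Ft (Ici (0:ℝ)) 0 := by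
    rw [← continuousWithinAt_Ioi_iff_Ici]
    have h1 : Tendsto F (nhdsWithin 0 (Ioi 0)) (nhds 0) := by
      have := ((Complex.continuous_ofReal.tendsto σ0).comp hσ0).mul
        ((hηcont.tendsto 0).mono_left nhdsWithin_le_nhds)
      simpa [hη0] using this
    have : Tendsto Ft (nhdsWithin 0 (Ioi 0)) (nhds 0) := by
      refine h1.congr' ?_
      filter_upwards [self_mem_nhdsWithin] with s hs
      simp [hFtdef, mem_Ioi.mp hs]
    rwa [ContinuousWithinAt, hFt0]
  -- Ft tends to some limit at +∞, which must be 0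
  have hF'int1 : IntegrableOn F' (Ioi 1) := hF'int.mono_set (Ioi_subset_Ioi (by norm_num))
  have hFTtop : Tendsto Ft atTop (nhds (Ft 1 + ∫ s in Ioi (1:ℝ), F' s)) := by
    have h2 : Tendsto (fun T => Ft 1 + ∫ s in (1:ℝ)..T, F' s) atTop
        (nhds (Ft 1 + ∫ s in Ioi (1:ℝ), F' s)) :=
      (intervalIntegral_tendsto_integral_Ioi 1 hF'int1 tendsto_id).const_add _
    refine Tendsto.congr' ?_ h2
    filter_upwards [Ioi_mem_atTop (1:ℝ)] with T hT
    have hT1 : (1:ℝ) ≤ T := le_of_lt hT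
    have hFTC : ∫ s in (1:ℝ)..T, F' s = Ft T - Ft 1 := by
      refine intervalIntegral.integral_eq_sub_of_hasDerivAt (fun y hy => ?_) ?_
      · rw [uIcc_of_le hT1] at hy
        exact hFtd y (lt_of_lt_of_le one_pos hy.1)
      · rw [intervalIntegrable_iff_integrableOn_Ioc_of_le hT1]
        exact hF'int.mono_set fun y hy => lt_of_lt_of_le one_pos (le_of_lt hy.1)
    rw [hFTC]; ring
  set c := Ft 1 + ∫ s in Ioi (1:ℝ), F' s with hcdef
  have hc0 : c = 0 := by
    have hnorm : IntegrableOn (fun s => ‖Ft s‖) (Ioi 0) := by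
      refine hPint.norm.congr ?_
      filter_upwards [hmemae] with s hs
      simp [hFtdef, hFdef, mem_Ioi.mp hs]
    have hcle : ‖c‖ ≤ 0 := gp_limit_nonpos hnorm (fun s => norm_nonneg _) hFTtop.norm
    exact norm_le_zero_iff.mp hcle
  have hIBP : ∫ s in Ioi (0:ℝ), F' s = 0 := by
    rw [integral_Ioi_of_hasDerivAt_of_tendsto hFtcont hFtd hF'int (hc0 ▸ hFTtop), hFt0, sub_zero]
  have hsplit : ∫ s in Ioi (0:ℝ), F' s
      = (∫ s in Ioi (0:ℝ), ((σ' s : ℝ) : ℂ) * η s) + ∫ s in Ioi (0:ℝ), (σ s : ℂ) * ηs s :=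
    integral_add hσ'η hσηs
  have hQeq : ∫ s in Ioi (0:ℝ), (σ s : ℂ) * ηs s = Q := by
    have h1 : (∫ s in Ioi (0:ℝ), ((σ' s : ℝ) : ℂ) * η s) = -Q := by
      rw [hQdef, ← integral_neg]
      refine integral_congr_ae (Eventually.of_forall fun s => ?_)
      push_cast; ring
    have h2 := hIBP
    rw [hsplit, h1] at h2
    linear_combination h2
  -- the identity g0 • w = I lam P + Q - R
  have hgw : (g0 : ℂ) * w = Complex.I * (lam : ℂ) * P + Q - R := by
    have hcong : ∫ s in Ioi (0:ℝ), (σ s : ℂ) * w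
        = ∫ s in Ioi (0:ℝ), (Complex.I * (lam : ℂ) * ((σ s : ℂ) * η s)
            + (σ s : ℂ) * ηs s - (σ s : ℂ) * f s) := by
      refine integral_congr_ae ?_
      filter_upwards [hmemae] with s hs
      have h := heq s hs
      have hw : w = Complex.I * (lam : ℂ) * η s + ηs s - f s := by rw [← h]; ring
      rw [hw]; ring
    have hL : ∫ s in Ioi (0:ℝ), (σ s : ℂ) * w = (g0 : ℂ) * w := by
      have : (fun s => (σ s : ℂ) * w) = fun s => σ s • w := by
        funext s; rw [Complex.real_smul]
      rw [this, integral_smul_const, hg0, Complex.real_smul]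
    have hI1 : IntegrableOn (fun s => Complex.I * (lam : ℂ) * ((σ s : ℂ) * η s)) (Ioi 0) :=
      hPint.const_mul _
    have hRsplit : ∫ s in Ioi (0:ℝ), (Complex.I * (lam : ℂ) * ((σ s : ℂ) * η s)
            + (σ s : ℂ) * ηs s - (σ s : ℂ) * f s)
        = Complex.I * (lam : ℂ) * P + (∫ s in Ioi (0:ℝ), (σ s : ℂ) * ηs s) - R := by
      have hI12 : IntegrableOn
          (fun s => Complex.I * (lam : ℂ) * ((σ s : ℂ) * η s) + (σ s : ℂ) * ηs s) (Ioi 0) :=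
        hI1.add hσηs
      rw [integral_sub hI12 hRint, integral_add hI1 hσηs, integral_const_mul]
    rw [← hL, hcong, hRsplit, hQeq]
  -- norm estimates
  set A := ∫ s in Ioi (0:ℝ), σ s * ‖η s‖ ^ 2 with hAdef
  set B := ∫ s in Ioi (0:ℝ), (-σ' s) * ‖η s‖ ^ 2 with hBdef
  set C := ∫ s in Ioi (0:ℝ), σ s * ‖f s‖ ^ 2 with hCdef
  have hAnn : 0 ≤ A := setIntegral_nonneg measurableSet_Ioi
    (fun s hs => mul_nonneg (hσ s hs) (by positivity))
  have hBnn : 0 ≤ B := setIntegral_nonneg measurableSet_Ioi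
    (fun s hs => mul_nonneg (hσ'neg' s hs) (by positivity))
  have hCnn : 0 ≤ C := setIntegral_nonneg measurableSet_Ioi
    (fun s hs => mul_nonneg (hσ s hs) (by positivity))
  have hP2 : ‖P‖ ^ 2 ≤ g0 * A := by rw [hg0]; exact hP
  have hQ2 : ‖Q‖ ^ 2 ≤ σ0 * B := by
    refine le_trans ?_ (mul_le_mul_of_nonneg_right hσ'sum hBnn)
    simpa [hBdef] using hQ
  have hR2 : ‖R‖ ^ 2 ≤ g0 * C := by rw [hg0]; exact hR
  have htri : g0 * ‖w‖ ≤ |lam| * ‖P‖ + ‖Q‖ + ‖R‖ := by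
    have h1 : ‖(g0 : ℂ) * w‖ = g0 * ‖w‖ := by
      rw [norm_mul, Complex.norm_real, Real.norm_eq_abs, abs_of_pos hg0pos]
    have h2 : ‖Complex.I * (lam : ℂ) * P + Q - R‖ ≤ |lam| * ‖P‖ + ‖Q‖ + ‖R‖ := by
      refine le_trans (norm_sub_le _ _) ?_
      have h3 : ‖Complex.I * (lam : ℂ) * P + Q‖ ≤ |lam| * ‖P‖ + ‖Q‖ := by
        refine le_trans (norm_add_le _ _) ?_
        have : ‖Complex.I * (lam : ℂ) * P‖ = |lam| * ‖P‖ := by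
          rw [norm_mul, norm_mul, Complex.norm_I, Complex.norm_real, Real.norm_eq_abs,
            one_mul]
        rw [this]
      linarith
    rw [← h1, hgw]; exact h2
  -- final algebra
  have hsq : (g0 * ‖w‖) * (g0 * ‖w‖) ≤ (|lam| * ‖P‖ + ‖Q‖ + ‖R‖) * (|lam| * ‖P‖ + ‖Q‖ + ‖R‖) :=
    mul_le_mul htri htri (by positivity) (by positivity)
  have habs : |lam| ^ 2 = lam ^ 2 := sq_abs lam
  have hmain : g0 * (g0 / 2 * ‖w‖ ^ 2)
      ≤ g0 * (2 * lam ^ 2 * A + σ0 / g0 * B + 2 * C) := by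
    have hexp : g0 * (σ0 / g0 * B) = σ0 * B := by field_simp
    rw [mul_add, mul_add, hexp]
    nlinarith [hsq, hP2, hQ2, hR2, sq_nonneg (|lam| * ‖P‖ - ‖R‖),
      sq_nonneg (|lam| * ‖P‖ + ‖R‖ - ‖Q‖), norm_nonneg P, norm_nonneg Q, norm_nonneg R,
      abs_nonneg lam, norm_nonneg w, sq_abs lam]
  exact le_of_mul_le_mul_left hmain hg0pos

/-- the Gurtin–Pipkin coupling estimate. If `iλη + η_s - w = f⁶` in the
memory space (stated at the level of `x`-derivatives), `η(·,0) = 0`, and `σ` satisfies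
hypothesis (H), then
`(g(0)/2)∫|w_x|² ≤ 2λ²∫∫σ|η_x|² + (σ(0)/g(0))∫∫(-σ')|η_x|² + 2∫∫σ|f⁶_x|²`. -/
theorem gurtin_pipkin_coupling
    (L dσ g0 σ0 lam : ℝ) (hL : 0 < L) (hd : 0 < dσ)
    (σ σ' : ℝ → ℝ)
    (hσ : ∀ s, 0 < s → 0 ≤ σ s)
    (hσint : IntegrableOn σ (Ioi 0))
    (hσderiv : ∀ s, 0 < s → HasDerivAt σ (σ' s) s)
    (hdaf : ∀ s, 0 < s → σ' s ≤ -dσ * σ s)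
    (hσ0 : Tendsto σ (nhdsWithin 0 (Ioi 0)) (nhds σ0))
    (hg0 : g0 = ∫ s in Ioi (0:ℝ), σ s) (hg0pos : 0 < g0)
    (ηx ηsx : ℝ → ℝ → ℂ) (wx : ℝ → ℂ) (f6x : ℝ → ℝ → ℂ)
    (hηx0 : ∀ x, ηx x 0 = 0)
    (hηs : ∀ x s, HasDerivAt (fun r => ηx x r) (ηsx x s) s)
    (heq : ∀ x ∈ Ioo (0:ℝ) L, ∀ s, 0 < s →
      Complex.I * (lam : ℂ) * ηx x s + ηsx x s - wx x = f6x x s)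
    (hint1 : IntegrableOn (fun p : ℝ × ℝ => σ p.2 * ‖ηx p.1 p.2‖ ^ 2)
      (Ioo (0:ℝ) L ×ˢ Ioi (0:ℝ)))
    (hint2 : IntegrableOn (fun p : ℝ × ℝ => σ' p.2 * ‖ηx p.1 p.2‖ ^ 2)
      (Ioo (0:ℝ) L ×ˢ Ioi (0:ℝ)))
    (hint3 : IntegrableOn (fun p : ℝ × ℝ => σ p.2 * ‖f6x p.1 p.2‖ ^ 2)
      (Ioo (0:ℝ) L ×ˢ Ioi (0:ℝ)))
    (hintw : IntegrableOn (fun x => ‖wx x‖ ^ 2) (Ioo (0:ℝ) L)) :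
    (g0 / 2) * (∫ x in Ioo (0:ℝ) L, ‖wx x‖ ^ 2) ≤
      2 * lam ^ 2 * (∫ x in Ioo (0:ℝ) L, ∫ s in Ioi (0:ℝ), σ s * ‖ηx x s‖ ^ 2)
      + (σ0 / g0) * (∫ x in Ioo (0:ℝ) L, ∫ s in Ioi (0:ℝ), (-σ' s) * ‖ηx x s‖ ^ 2)
      + 2 * ∫ x in Ioo (0:ℝ) L, ∫ s in Ioi (0:ℝ), σ s * ‖f6x x s‖ ^ 2 := by
  -- basic facts about σ and σ'
  have hσ'neg : ∀ s ∈ Ioi (0:ℝ), σ' s ≤ 0 := by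
    intro s hs
    have h1 := hdaf s hs
    have h2 := mul_nonneg hd.le (hσ s hs)
    linarith
  have hσcont : ContinuousOn σ (Ioi 0) := fun s hs =>
    ((hσderiv s hs).continuousAt).continuousWithinAt
  have hanti : AntitoneOn σ (Ioi 0) := by
    refine antitoneOn_of_deriv_nonpos (convex_Ioi 0) hσcont ?_ ?_
    · rw [interior_Ioi]
      exact fun x hx => ((hσderiv x hx).differentiableAt).differentiableWithinAt
    · rw [interior_Ioi]
      intro x hx
      rw [(hσderiv x hx).deriv]
      exact hσ'neg x hx
  have hσ2anti : Antitone (fun t => σ (max t 1)) := by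
    intro a b hab
    exact hanti (lt_of_lt_of_le one_pos (le_max_right a 1))
      (lt_of_lt_of_le one_pos (le_max_right b 1)) (max_le_max hab le_rfl)
  have hbdd : BddBelow (range fun t => σ (max t 1)) := by
    refine ⟨0, ?_⟩
    rintro y ⟨t, rfl⟩
    exact hσ _ (lt_of_lt_of_le one_pos (le_max_right t 1))
  have hσtop : Tendsto σ atTop (nhds (⨅ t : ℝ, σ (max t 1))) := by
    refine (tendsto_atTop_ciInf hσ2anti hbdd).congr' ?_
    filter_upwards [Ioi_mem_atTop (1:ℝ)] with t ht
    rw [max_eq_left (le_of_lt ht)]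
  set l := ⨅ t : ℝ, σ (max t 1) with hldef
  have hlnn : 0 ≤ l := by
    refine ge_of_tendsto hσtop ?_
    filter_upwards [Ioi_mem_atTop (0:ℝ)] with t ht using hσ t ht
  -- the extension of σ by σ0 at 0
  set σt : ℝ → ℝ := fun s => if 0 < s then σ s else σ0 with hσtdef
  have hσt0 : σt 0 = σ0 := by simp [hσtdef]
  have hσtcont : ContinuousWithinAt σt (Ici 0) 0 := by
    rw [← continuousWithinAt_Ioi_iff_Ici]
    have h1 : Tendsto σt (nhdsWithin 0 (Ioi 0)) (nhds σ0) := by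
      refine hσ0.congr' ?_
      filter_upwards [self_mem_nhdsWithin] with s hs
      simp [hσtdef, mem_Ioi.mp hs]
    rw [ContinuousWithinAt, hσt0]
    exact h1
  have hσtd : ∀ s ∈ Ioi (0:ℝ), HasDerivAt σt (σ' s) s := by
    intro s hs
    refine (hσderiv s hs).congr_of_eventuallyEq ?_
    filter_upwards [Ioi_mem_nhds hs] with r hr
    simp [hσtdef, if_pos (mem_Ioi.mp hr)]
  have hσttop : Tendsto σt atTop (nhds l) := by
    refine hσtop.congr' ?_
    filter_upwards [Ioi_mem_atTop (0:ℝ)] with t ht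
    simp [hσtdef, if_pos (mem_Ioi.mp ht)]
  have hσ'int : IntegrableOn σ' (Ioi 0) :=
    integrableOn_Ioi_deriv_of_nonpos hσtcont hσtd hσ'neg hσttop
  have hσ'sum : (∫ s in Ioi (0:ℝ), -σ' s) ≤ σ0 := by
    have h1 := integral_Ioi_of_hasDerivAt_of_nonpos hσtcont hσtd hσ'neg hσttop
    rw [hσt0] at h1
    rw [integral_neg, h1]
    linarith
  -- slicing the product integrability assumptions
  have hprodmeas : ((volume : Measure ℝ).restrict (Ioo (0:ℝ) L)).prod
      ((volume : Measure ℝ).restrict (Ioi (0:ℝ)))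
      = (volume : Measure (ℝ × ℝ)).restrict (Ioo (0:ℝ) L ×ˢ Ioi (0:ℝ)) := by
    rw [Measure.prod_restrict, ← Measure.volume_eq_prod]
  have h1' : Integrable (fun p : ℝ × ℝ => σ p.2 * ‖ηx p.1 p.2‖ ^ 2)
      (((volume : Measure ℝ).restrict (Ioo (0:ℝ) L)).prod
        ((volume : Measure ℝ).restrict (Ioi (0:ℝ)))) := by
    rw [hprodmeas]; exact hint1
  have h2' : Integrable (fun p : ℝ × ℝ => σ' p.2 * ‖ηx p.1 p.2‖ ^ 2)
      (((volume : Measure ℝ).restrict (Ioo (0:ℝ) L)).prod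
        ((volume : Measure ℝ).restrict (Ioi (0:ℝ)))) := by
    rw [hprodmeas]; exact hint2
  have h3' : Integrable (fun p : ℝ × ℝ => σ p.2 * ‖f6x p.1 p.2‖ ^ 2)
      (((volume : Measure ℝ).restrict (Ioo (0:ℝ) L)).prod
        ((volume : Measure ℝ).restrict (Ioi (0:ℝ)))) := by
    rw [hprodmeas]; exact hint3
  have h2n : Integrable (fun p : ℝ × ℝ => (-σ' p.2) * ‖ηx p.1 p.2‖ ^ 2)
      (((volume : Measure ℝ).restrict (Ioo (0:ℝ) L)).prod
        ((volume : Measure ℝ).restrict (Ioi (0:ℝ)))) := by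
    refine h2'.neg.congr (Eventually.of_forall fun p => ?_)
    simp only [Pi.neg_apply]; ring
  have h1ae := h1'.prod_right_ae
  have h2ae := h2'.prod_right_ae
  have h3ae := h3'.prod_right_ae
  have hA1 : Integrable (fun x => ∫ s in Ioi (0:ℝ), σ s * ‖ηx x s‖ ^ 2)
      ((volume : Measure ℝ).restrict (Ioo (0:ℝ) L)) := h1'.integral_prod_left
  have hB1 : Integrable (fun x => ∫ s in Ioi (0:ℝ), (-σ' s) * ‖ηx x s‖ ^ 2)
      ((volume : Measure ℝ).restrict (Ioo (0:ℝ) L)) := h2n.integral_prod_left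
  have hC1 : Integrable (fun x => ∫ s in Ioi (0:ℝ), σ s * ‖f6x x s‖ ^ 2)
      ((volume : Measure ℝ).restrict (Ioo (0:ℝ) L)) := h3'.integral_prod_left
  -- measurability of ηsx x
  have hηsmx : ∀ x, AEStronglyMeasurable (ηsx x) ((volume : Measure ℝ).restrict (Ioi (0:ℝ))) := by
    intro x
    have h1 : ηsx x = deriv (fun r => ηx x r) := funext fun s => ((hηs x s).deriv).symm
    rw [h1]
    exact (stronglyMeasurable_deriv (fun r => ηx x r)).aestronglyMeasurable.restrict
  -- the pointwise (in x) estimate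
  have hae : ∀ᵐ x ∂((volume : Measure ℝ).restrict (Ioo (0:ℝ) L)),
      g0 / 2 * ‖wx x‖ ^ 2 ≤ 2 * lam ^ 2 * (∫ s in Ioi (0:ℝ), σ s * ‖ηx x s‖ ^ 2)
        + σ0 / g0 * (∫ s in Ioi (0:ℝ), (-σ' s) * ‖ηx x s‖ ^ 2)
        + 2 * (∫ s in Ioi (0:ℝ), σ s * ‖f6x x s‖ ^ 2) := by
    filter_upwards [h1ae, h2ae, h3ae, ae_restrict_mem measurableSet_Ioo] with x hx1 hx2 hx3 hxm
    exact gp_slice g0 σ0 lam σ σ' (fun s hs => hσ s hs) hσint hσ'int hσ'sum hσ'neg hσ0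
      (fun s hs => hσderiv s hs) hg0 hg0pos (ηx x) (ηsx x) (wx x) (f6x x) (hηx0 x) (hηs x)
      (hηsmx x) (fun s hs => heq x hxm s hs) hx1 hx2 hx3
  -- integrate in x
  have hwint' : Integrable (fun x => g0 / 2 * ‖wx x‖ ^ 2)
      ((volume : Measure ℝ).restrict (Ioo (0:ℝ) L)) := hintw.const_mul _
  have hA2 : Integrable (fun x => 2 * lam ^ 2 * (∫ s in Ioi (0:ℝ), σ s * ‖ηx x s‖ ^ 2))
      ((volume : Measure ℝ).restrict (Ioo (0:ℝ) L)) := hA1.const_mul _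
  have hB2 : Integrable (fun x => σ0 / g0 * (∫ s in Ioi (0:ℝ), (-σ' s) * ‖ηx x s‖ ^ 2))
      ((volume : Measure ℝ).restrict (Ioo (0:ℝ) L)) := hB1.const_mul _
  have hC2 : Integrable (fun x => 2 * (∫ s in Ioi (0:ℝ), σ s * ‖f6x x s‖ ^ 2))
      ((volume : Measure ℝ).restrict (Ioo (0:ℝ) L)) := hC1.const_mul _
  have hAB2 : Integrable (fun x => 2 * lam ^ 2 * (∫ s in Ioi (0:ℝ), σ s * ‖ηx x s‖ ^ 2)
      + σ0 / g0 * (∫ s in Ioi (0:ℝ), (-σ' s) * ‖ηx x s‖ ^ 2))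
      ((volume : Measure ℝ).restrict (Ioo (0:ℝ) L)) := hA2.add hB2
  have hRHS2 : Integrable (fun x => 2 * lam ^ 2 * (∫ s in Ioi (0:ℝ), σ s * ‖ηx x s‖ ^ 2)
      + σ0 / g0 * (∫ s in Ioi (0:ℝ), (-σ' s) * ‖ηx x s‖ ^ 2)
      + 2 * (∫ s in Ioi (0:ℝ), σ s * ‖f6x x s‖ ^ 2))
      ((volume : Measure ℝ).restrict (Ioo (0:ℝ) L)) := hAB2.add hC2
  have hm := integral_mono_ae hwint' hRHS2 hae
  rw [integral_const_mul, integral_add hAB2 hC2, integral_add hA2 hB2, integral_const_mul,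
    integral_const_mul, integral_const_mul] at hm
  exact hm
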